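/- Let N ⊴ B₃ with N ≤ PB₃ of finite index, and let (m,f) ∈ ℤ × F₂ satisfy the two hexagon relations modulo N. Then f·θ(f) ∈ N, where θ is the automorphism of F₂ swapping the two generators x and y (i.e. f(x,y)f(y,x) ∈ N). -/

import Mathlib

def braidRel : Set (FreeGroup (Fin 2)) :=
  {FreeGroup.of 0 * FreeGroup.of 1 * FreeGroup.of 0 *
    (FreeGroup.of 1 * FreeGroup.of 0 * FreeGroup.of 1)⁻¹}

/-- The Artin braid group on 3 strands. -/
abbrev B3 := PresentedGroup braidRel

def σ₁ : B3 := PresentedGroup.of 0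
def σ₂ : B3 := PresentedGroup.of 1

/-- The standard projection B₃ → S₃. -/
def ρ : B3 →* Equiv.Perm (Fin 3) :=
  PresentedGroup.toGroup (f := ![Equiv.swap 0 1, Equiv.swap 1 2]) (by
    intro r hr
    simp only [braidRel, Set.mem_singleton_iff] at hr
    subst hr
    simp only [map_mul, map_inv, FreeGroup.lift_apply_of]
    decide)

/-- The pure braid group on 3 strands. -/
def PB3 : Subgroup B3 := ρ.ker

def c : B3 := (σ₁ * σ₂ * σ₁) ^ 2

abbrev F2 := FreeGroup (Fin 2)
def xx : F2 := FreeGroup.of 0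
def yy : F2 := FreeGroup.of 1

/-- The identification of F₂ with ⟨σ₁², σ₂²⟩ ≤ PB₃. -/
def ι : F2 →* B3 := FreeGroup.lift ![σ₁ ^ 2, σ₂ ^ 2]

/-- The pair (m, f) satisfies the two hexagon relations modulo N. -/
def Hex (N : Subgroup B3) [N.Normal] (m : ℤ) (f : F2) : Prop :=
  QuotientGroup.mk' N (σ₁ ^ (2 * m + 1) * (ι f)⁻¹ * σ₂ ^ (2 * m + 1) * ι f) =
      QuotientGroup.mk' N ((ι f)⁻¹ * σ₁ * σ₂ * (σ₁ ^ 2) ^ (-m) * c ^ m) ∧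
  QuotientGroup.mk' N ((ι f)⁻¹ * σ₂ ^ (2 * m + 1) * ι f * σ₁ ^ (2 * m + 1)) =
      QuotientGroup.mk' N (σ₂ * σ₁ * (σ₂ ^ 2) ^ (-m) * c ^ m * ι f)

/-- N_ord: the lcm of the orders of x₁₂N, x₂₃N and cN in B₃/N. -/
noncomputable def Nord (N : Subgroup B3) [N.Normal] : ℕ :=
  Nat.lcm
    (Nat.lcm (orderOf (QuotientGroup.mk' N (σ₁ ^ 2)))
      (orderOf (QuotientGroup.mk' N (σ₂ ^ 2))))
    (orderOf (QuotientGroup.mk' N c))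

/-- The endomorphism E_{m,f} of F₂. -/
def Emap (m : ℤ) (f : F2) : F2 →* F2 :=
  FreeGroup.lift ![xx ^ (2 * m + 1), f⁻¹ * yy ^ (2 * m + 1) * f]

/-- [m, f] is a GT-shadow with target N and kernel (source) K. -/
def IsShadow (K N : Subgroup B3) [N.Normal] (m : ℤ) (f : F2) : Prop :=
  Hex N m f ∧
  (∃ g ∈ commutator F2, g⁻¹ * f ∈ N.comap ι) ∧
  IsUnit ((2 * m + 1 : ℤ) : ZMod (Nord N)) ∧
  ∃ T : B3 →* B3 ⧸ N,
    T σ₁ = QuotientGroup.mk' N (σ₁ ^ (2 * m + 1)) ∧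
    T σ₂ = QuotientGroup.mk' N ((ι f)⁻¹ * σ₂ ^ (2 * m + 1) * ι f) ∧
    Function.Surjective T ∧
    T.ker = K

/-- [m, f] is a GT-shadow with target N (with unspecified source). -/
def IsShadowTgt (N : Subgroup B3) [N.Normal] (m : ℤ) (f : F2) : Prop :=
  ∃ K : Subgroup B3, IsShadow K N m f

/-- The swap automorphism θ of F₂. -/
def θ : F2 →* F2 := FreeGroup.lift ![yy, xx]

lemma braid_eq : σ₁ * σ₂ * σ₁ = σ₂ * σ₁ * σ₂ := by
  have h : PresentedGroup.mk braidRel (FreeGroup.of 0 * FreeGroup.of 1 * FreeGroup.of 0 *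
      (FreeGroup.of 1 * FreeGroup.of 0 * FreeGroup.of 1)⁻¹) = 1 := by
    have : (FreeGroup.of 0 * FreeGroup.of 1 * FreeGroup.of 0 *
      (FreeGroup.of 1 * FreeGroup.of 0 * FreeGroup.of 1)⁻¹ : FreeGroup (Fin 2)) ∈
        Subgroup.normalClosure braidRel :=
      Subgroup.subset_normalClosure rfl
    exact (QuotientGroup.eq_one_iff _).mpr this
  simp only [map_mul, map_inv] at h
  exact mul_inv_eq_one.mp h

/-- Δ -/
abbrev Δb : B3 := σ₁ * σ₂ * σ₁

lemma delta_s1 : Δb * σ₁ = σ₂ * Δb := by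
  show σ₁ * σ₂ * σ₁ * σ₁ = σ₂ * (σ₁ * σ₂ * σ₁)
  conv_lhs => rw [braid_eq]
  group

lemma delta_s2 : Δb * σ₂ = σ₁ * Δb := by
  show σ₁ * σ₂ * σ₁ * σ₂ = σ₁ * (σ₁ * σ₂ * σ₁)
  conv_rhs => rw [braid_eq]
  group

lemma c_comm_s1 : Commute c σ₁ := by
  unfold c
  show Δb ^ 2 * σ₁ = σ₁ * Δb ^ 2
  rw [sq, mul_assoc, delta_s1, ← mul_assoc, delta_s2, mul_assoc, ← sq]

lemma c_comm_s2 : Commute c σ₂ := by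
  unfold c
  show Δb ^ 2 * σ₂ = σ₂ * Δb ^ 2
  rw [sq, mul_assoc, delta_s2, ← mul_assoc, delta_s1, mul_assoc, ← sq]

lemma c_comm_iota (f : F2) : Commute c (ι f) := by
  induction f using FreeGroup.induction_on with
  | C1 => simp [Commute.one_right]
  | of i =>
      fin_cases i
      · simpa [ι] using (c_comm_s1.pow_right 2)
      · simpa [ι] using (c_comm_s2.pow_right 2)
  | inv_of i h => simpa using h.inv_right
  | mul a b ha hb => simpa using ha.mul_right hb

lemma delta_sq1 : Δb * (σ₁ * σ₁) = σ₂ * σ₂ * Δb := by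
  rw [← mul_assoc, delta_s1, mul_assoc, delta_s1, ← mul_assoc]

lemma delta_sq2 : Δb * (σ₂ * σ₂) = σ₁ * σ₁ * Δb := by
  rw [← mul_assoc, delta_s2, mul_assoc, delta_s2, ← mul_assoc]

lemma iota_theta (f : F2) : ι (θ f) = Δb * ι f * Δb⁻¹ := by
  induction f using FreeGroup.induction_on with
  | C1 => simp only [map_one, mul_one]; group
  | of i =>
      fin_cases i
      · show ι (θ (FreeGroup.of (0 : Fin 2))) = Δb * ι (FreeGroup.of (0 : Fin 2)) * Δb⁻¹
        have h1 : θ (FreeGroup.of (0 : Fin 2)) = yy := by simp [θ, yy]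
        have h2 : ι yy = σ₂ ^ 2 := by simp [ι, yy]
        have h3 : ι (FreeGroup.of (0 : Fin 2)) = σ₁ ^ 2 := by simp [ι]
        rw [h1, h2, h3, eq_mul_inv_iff_mul_eq, sq, sq, mul_assoc, delta_sq1, mul_assoc]
      · show ι (θ (FreeGroup.of (1 : Fin 2))) = Δb * ι (FreeGroup.of (1 : Fin 2)) * Δb⁻¹
        have h1 : θ (FreeGroup.of (1 : Fin 2)) = xx := by simp [θ, xx]
        have h2 : ι xx = σ₁ ^ 2 := by simp [ι, xx]
        have h3 : ι (FreeGroup.of (1 : Fin 2)) = σ₂ ^ 2 := by simp [ι]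
        rw [h1, h2, h3, eq_mul_inv_iff_mul_eq, sq, sq, mul_assoc, delta_sq2, mul_assoc]
  | inv_of i h =>
      rw [map_inv, map_inv, map_inv, h]
      group
  | mul a b ha hb =>
      rw [map_mul, map_mul, map_mul, ha, hb]
      group

/-- If (m,f) satisfies the hexagon relations modulo N then f·θ(f) ∈ N. -/
theorem f_theta_f_mem (N : Subgroup B3) [N.Normal] (hfin : N.FiniteIndex)
    (hle : N ≤ PB3) (m : ℤ) (f : F2) (hhex : Hex N m f) :
    ι f * ι (θ f) ∈ N := by
  obtain ⟨h1, h2⟩ := hhex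
  set π : B3 →* B3 ⧸ N := QuotientGroup.mk' N with hπ
  set S : B3 ⧸ N := π σ₁ with hS
  set T : B3 ⧸ N := π σ₂ with hT
  set A : B3 ⧸ N := π (ι f) with hA
  set D : B3 ⧸ N := π Δb with hD
  set C : B3 ⧸ N := π c with hC
  have hDdef : D = S * T * S := by simp [hD, hS, hT, Δb, map_mul]
  have hbraid : S * T * S = T * S * T := by
    rw [hS, hT, ← map_mul, ← map_mul, ← map_mul, ← map_mul, braid_eq]
  have hDT : D * T = S * D := by
    rw [hDdef]
    conv_rhs => rw [hbraid]
    group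
  have hCS : Commute C S := by
    simpa [hC, hS] using (c_comm_s1.map π)
  have hCA : Commute C A := by
    simpa [hC, hA] using ((c_comm_iota f).map π)
  have e1 : S ^ (2*m+1) * A⁻¹ * T ^ (2*m+1) * A = A⁻¹ * D * (S ^ (2*m+1))⁻¹ * C ^ m := by
    have lhs : π (σ₁ ^ (2 * m + 1) * (ι f)⁻¹ * σ₂ ^ (2 * m + 1) * ι f)
        = S ^ (2*m+1) * A⁻¹ * T ^ (2*m+1) * A := by
      simp [hS, hT, hA, map_mul, map_zpow, map_inv]
    have rhs : π ((ι f)⁻¹ * σ₁ * σ₂ * (σ₁ ^ 2) ^ (-m) * c ^ m)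
        = A⁻¹ * S * T * (S ^ (2:ℤ)) ^ (-m) * C ^ m := by
      simp [hS, hT, hA, hC, map_mul, map_zpow, map_inv, map_pow]
    have key : A⁻¹ * S * T * (S ^ (2:ℤ)) ^ (-m) * C ^ m
        = A⁻¹ * D * (S ^ (2*m+1))⁻¹ * C ^ m := by
      rw [hDdef, ← zpow_mul]
      group
    rw [← key, ← rhs, ← lhs, h1]
  have e2 : A⁻¹ * T ^ (2*m+1) * A * S ^ (2*m+1) = D * (T ^ (2*m+1))⁻¹ * C ^ m * A := by
    have lhs : π ((ι f)⁻¹ * σ₂ ^ (2 * m + 1) * ι f * σ₁ ^ (2 * m + 1))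
        = A⁻¹ * T ^ (2*m+1) * A * S ^ (2*m+1) := by
      simp [hS, hT, hA, map_mul, map_zpow, map_inv]
    have rhs : π (σ₂ * σ₁ * (σ₂ ^ 2) ^ (-m) * c ^ m * ι f)
        = T * S * (T ^ (2:ℤ)) ^ (-m) * C ^ m * A := by
      simp [hS, hT, hA, hC, map_mul, map_zpow, map_inv, map_pow]
    have key : T * S * (T ^ (2:ℤ)) ^ (-m) * C ^ m * A
        = D * (T ^ (2*m+1))⁻¹ * C ^ m * A := by
      rw [hDdef, hbraid, ← zpow_mul]
      group
    rw [← key, ← rhs, ← lhs, h2]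
  set P : B3 ⧸ N := S ^ (2*m+1) with hP
  set Q : B3 ⧸ N := T ^ (2*m+1) with hQ
  have hQ' : A⁻¹ * Q * A = P⁻¹ * (A⁻¹ * D * P⁻¹ * C ^ m) := by
    rw [← e1]; group
  have step : P⁻¹ * (A⁻¹ * D * P⁻¹ * C ^ m) * P = D * Q⁻¹ * C ^ m * A := by
    rw [← hQ', e2]
  have hCPm : C ^ m * P = P * C ^ m := (hCS.zpow_zpow m (2*m+1)).eq
  have hCAm : C ^ m * A = A * C ^ m := (hCA.zpow_left m).eq
  have step2 : P⁻¹ * A⁻¹ * D * C ^ m = D * Q⁻¹ * A * C ^ m := by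
    have l : P⁻¹ * (A⁻¹ * D * P⁻¹ * C ^ m) * P = P⁻¹ * A⁻¹ * D * C ^ m := by
      calc P⁻¹ * (A⁻¹ * D * P⁻¹ * C ^ m) * P
          = P⁻¹ * A⁻¹ * D * P⁻¹ * (C ^ m * P) := by group
        _ = P⁻¹ * A⁻¹ * D * P⁻¹ * (P * C ^ m) := by rw [hCPm]
        _ = P⁻¹ * A⁻¹ * D * C ^ m := by group
    have r : D * Q⁻¹ * C ^ m * A = D * Q⁻¹ * A * C ^ m := by
      calc D * Q⁻¹ * C ^ m * A = D * Q⁻¹ * (C ^ m * A) := by group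
        _ = D * Q⁻¹ * (A * C ^ m) := by rw [hCAm]
        _ = D * Q⁻¹ * A * C ^ m := by group
    rw [← l, step, r]
  have step3 : P⁻¹ * A⁻¹ * D = D * Q⁻¹ * A := mul_right_cancel step2
  have hq : D * Q = P * D := by
    have h1 : S = D * T * D⁻¹ := by rw [hDT]; group
    have h2 : P = D * Q * D⁻¹ := by
      rw [hP, hQ, h1, conj_zpow]
    rw [h2]; group
  have hDQ : D * Q⁻¹ = P⁻¹ * D := by
    calc D * Q⁻¹ = P⁻¹ * (P * D) * Q⁻¹ := by group
      _ = P⁻¹ * (D * Q) * Q⁻¹ := by rw [hq]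
      _ = P⁻¹ * D := by group
  have final : A⁻¹ * D = D * A := by
    rw [hDQ] at step3
    calc A⁻¹ * D = P * (P⁻¹ * A⁻¹ * D) := by group
      _ = P * (P⁻¹ * D * A) := by rw [step3]
      _ = D * A := by group
  have hone : π (ι f * ι (θ f)) = 1 := by
    rw [map_mul, iota_theta, map_mul, map_mul, map_inv]
    show A * (D * A * D⁻¹) = 1
    have hADinv : D * A * D⁻¹ = A⁻¹ := by rw [← final]; group
    rw [hADinv, mul_inv_cancel]
  exact (QuotientGroup.eq_one_iff _).mp hone
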